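/- There exist a real constant c > 0 and N₀ such that every integer N ≥ N₀ can be represented as N = n₁ + n₂ with positive integers n₁, n₂ satisfying F(nᵢ) ≥ c·log N for i = 1, 2. -/

import Mathlib

/-- `F n` is the distance from `n` to the nearest prime number. -/
noncomputable def F (n : ℕ) : ℕ :=
  sInf {d : ℕ | ∃ p : ℕ, p.Prime ∧ ((n : ℤ) - (p : ℤ)).natAbs = d}

lemma F_spec (n : ℕ) : ∃ p : ℕ, p.Prime ∧ ((n:ℤ) - p).natAbs = F n := by
  have hne : {d : ℕ | ∃ p : ℕ, p.Prime ∧ ((n : ℤ) - (p : ℤ)).natAbs = d}.Nonempty :=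
    ⟨((n:ℤ) - 2).natAbs, 2, Nat.prime_two, rfl⟩
  exact Nat.sInf_mem hne

lemma le_F (n k : ℕ) (h : ∀ p : ℕ, p.Prime → k ≤ ((n:ℤ) - p).natAbs) : k ≤ F n := by
  obtain ⟨p, hp, he⟩ := F_spec n
  rw [← he]; exact h p hp

lemma bad_card_le (N k : ℕ) :
    (((Finset.range (N+k+1)).filter Nat.Prime).biUnion
        (fun p => Finset.Icc (p - k) (p + k))).card
      ≤ ((Finset.range (N+k+1)).filter Nat.Prime).card * (2*k+1) := by
  set P := (Finset.range (N+k+1)).filter Nat.Prime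
  refine le_trans Finset.card_biUnion_le ?_
  calc ∑ p ∈ P, (Finset.Icc (p - k) (p + k)).card
      ≤ ∑ _p ∈ P, (2*k+1) := Finset.sum_le_sum (fun p _ => by rw [Nat.card_Icc]; omega)
    _ = P.card * (2*k+1) := by rw [Finset.sum_const, smul_eq_mul]

lemma big_primes_pow (M : ℕ) :
    (Nat.sqrt M + 1) ^ (((Finset.range (M+1)).filter Nat.Prime).filter
        (fun p => Nat.sqrt M < p)).card ≤ 4 ^ M := by
  set P := (Finset.range (M+1)).filter Nat.Prime with hP
  set Q := P.filter (fun p => Nat.sqrt M < p) with hQ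
  have h1 : (Nat.sqrt M + 1) ^ Q.card ≤ ∏ p ∈ Q, p := by
    apply Finset.pow_card_le_prod
    intro p hp
    simp only [hQ, Finset.mem_filter] at hp
    omega
  have h2 : ∏ p ∈ Q, p ≤ ∏ p ∈ P, p := by
    apply Finset.prod_le_prod_of_subset_of_one_le' (Finset.filter_subset _ _)
    intro p hp _
    simp only [hP, Finset.mem_filter] at hp
    exact hp.2.one_lt.le
  have h3 : ∏ p ∈ P, p ≤ 4 ^ M := by
    have := primorial_le_4_pow M
    rw [primorial] at this
    convert this using 2
  exact le_trans h1 (le_trans h2 h3)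

lemma pi_le (M : ℕ) :
    ((Finset.range (M+1)).filter Nat.Prime).card ≤ (Nat.sqrt M + 1) +
      (((Finset.range (M+1)).filter Nat.Prime).filter (fun p => Nat.sqrt M < p)).card := by
  set P := (Finset.range (M+1)).filter Nat.Prime with hP
  have := Finset.card_filter_add_card_filter_not (s := P) (p := fun p => Nat.sqrt M < p)
  have hsmall : (P.filter (fun p => ¬ Nat.sqrt M < p)).card ≤ Nat.sqrt M + 1 := by
    refine le_trans (Finset.card_le_card (t := Finset.range (Nat.sqrt M + 1)) ?_) (by simp)
    intro p hp
    simp only [Finset.mem_filter, not_lt] at hp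
    simp only [Finset.mem_range]
    omega
  omega

set_option maxHeartbeats 1600000 in
lemma key_ineq (N k s t B : ℕ)
    (hL1000 : (1000:ℝ) ≤ Real.log N)
    (hNbig : (250000:ℝ) ≤ (N:ℝ))
    (hk_ub : (k:ℝ) < Real.log N/1000 + 1)
    (hkN : k ≤ N)
    (hs2 : s^2 ≤ N + k) (hMs : N + k < (s+1)^2)
    (hpow : (s+1)^t ≤ 4^(N+k))
    (hB : B ≤ (s+1+t) * (2*k+1)) :
    2*B + 3 ≤ N := by
  -- first convert everything to the reals
  set L : ℝ := Real.log N with hLdef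
  have hN0R : (0:ℝ) < N := by linarith
  have hkNR : (k:ℝ) ≤ N := Nat.cast_le.mpr hkN
  have hMR : ((N+k:ℕ):ℝ) ≤ 2*N := by push_cast; linarith
  have hs2R : ((s:ℝ))^2 ≤ ((N+k:ℕ):ℝ) := by exact_mod_cast hs2
  have hMsR : ((N+k:ℕ):ℝ) < ((s:ℝ)+1)^2 := by exact_mod_cast hMs
  have hBR : (B:ℝ) ≤ ((s:ℝ)+1+(t:ℝ))*(2*(k:ℝ)+1) := by exact_mod_cast hB
  have hpowR : ((s:ℝ)+1)^t ≤ (2:ℝ)^(2*(N+k)) := by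
    have hp2 : (s + 1) ^ t ≤ 2 ^ (2*(N+k)) := by
      calc (s+1)^t ≤ 4^(N+k) := hpow
        _ = 2^(2*(N+k)) := by rw [pow_mul]; norm_num
    exact_mod_cast hp2
  have hgoal : ((2*B+3:ℕ):ℝ) = 2*(B:ℝ)+3 := by push_cast; ring
  rw [show (2*B + 3 ≤ N) = ((2*B+3:ℕ) ≤ N) from rfl, ← Nat.cast_le (α := ℝ), hgoal]
  clear hs2 hMs hpow hB hkN
  -- now pure real reasoning
  have hN1R : (1:ℝ) ≤ N := by linarith
  have hL0 : (0:ℝ) < L := by linarith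
  have hlog2u : Real.log 2 < 0.6931471808 := Real.log_two_lt_d9
  set x : ℝ := Real.sqrt N with hxdef
  have hx2 : x^2 = N := Real.sq_sqrt (le_of_lt hN0R)
  have hx0 : (0:ℝ) ≤ x := Real.sqrt_nonneg N
  have hx500 : (500:ℝ) ≤ x := by nlinarith
  have hLx : L ≤ 2*x := by
    have h1 : Real.log x = L/2 := by rw [hxdef, Real.log_sqrt (le_of_lt hN0R)]
    have h2 : Real.log x ≤ x - 1 := Real.log_le_sub_one_of_pos (by linarith)
    linarith
  have hkR : (0:ℝ) ≤ (k:ℝ) := Nat.cast_nonneg k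
  have hNM : (N:ℝ) ≤ ((N+k:ℕ):ℝ) := by push_cast; linarith
  have hlogs : L/2 ≤ Real.log ((s:ℝ)+1) := by
    have h1 : L ≤ Real.log (((s:ℝ)+1)^2) :=
      Real.log_le_log hN0R (le_of_lt (lt_of_le_of_lt hNM hMsR))
    rw [Real.log_pow] at h1
    push_cast at h1
    linarith
  have htL : (t:ℝ) * L ≤ 6*(N:ℝ) := by
    have h1 : Real.log (((s:ℝ)+1)^t) ≤ Real.log ((2:ℝ)^(2*(N+k))) :=
      Real.log_le_log (by positivity) hpowR
    rw [Real.log_pow, Real.log_pow] at h1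
    have h2 : (t:ℝ) * (L/2) ≤ (t:ℝ) * Real.log ((s:ℝ)+1) :=
      mul_le_mul_of_nonneg_left hlogs (Nat.cast_nonneg t)
    have h3 : ((2*(N+k) : ℕ):ℝ) * Real.log 2 ≤ (2*(2*(N:ℝ))) * 0.6931471808 := by
      have hc : ((2*(N+k):ℕ):ℝ) = 2*((N+k:ℕ):ℝ) := by push_cast; ring
      rw [hc]
      have hnn : (0:ℝ) ≤ ((N+k:ℕ):ℝ) := Nat.cast_nonneg _
      nlinarith
    push_cast at h1 h3
    nlinarith
  clear hpowR
  have hsx : (s:ℝ) + 1 ≤ 2*x := by nlinarith [hs2R, hMR, Nat.cast_nonneg (α := ℝ) s]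
  have hfactor2 : 2*(k:ℝ)+1 ≤ L/500 + 3 := by linarith
  have ht0 : (0:ℝ) ≤ (t:ℝ) := Nat.cast_nonneg t
  have hBR2 : (B:ℝ) ≤ (2*x + (t:ℝ))*(L/500 + 3) := by
    have h := mul_le_mul (by linarith : (s:ℝ)+1+(t:ℝ) ≤ 2*x + (t:ℝ)) hfactor2
      (by linarith) (by linarith)
    linarith
  have ht1000 : (t:ℝ) * 1000 ≤ 6*(N:ℝ) :=
    le_trans (mul_le_mul_of_nonneg_left hL1000 ht0) htL
  have e1 : 2*x*(L/500) ≤ (N:ℝ)/125 := by nlinarith [mul_le_mul_of_nonneg_left hLx hx0]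
  have e2 : 6*x ≤ 12*(N:ℝ)/1000 := by nlinarith
  have e3 : (t:ℝ)*(L/500) ≤ 6*(N:ℝ)/500 := by linarith
  have e4 : 3*(t:ℝ) ≤ 18*(N:ℝ)/1000 := by linarith
  have hexp : (2*x + (t:ℝ))*(L/500 + 3)
      = 2*x*(L/500) + 6*x + (t:ℝ)*(L/500) + 3*(t:ℝ) := by ring
  have hB005 : (B:ℝ) ≤ (5*(N:ℝ))/100 := by rw [hexp] at hBR2; linarith
  linarith

set_option maxRecDepth 8000 in
theorem prime_avoiding_basis_order_two_trivial :
    ∃ c : ℝ, 0 < c ∧ ∃ N₀ : ℕ, ∀ N : ℕ, N₀ ≤ N →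
      ∃ n₁ n₂ : ℕ, 0 < n₁ ∧ 0 < n₂ ∧ N = n₁ + n₂ ∧
        (F n₁ : ℝ) ≥ c * Real.log N ∧ (F n₂ : ℝ) ≥ c * Real.log N := by
  refine ⟨1/1000, by norm_num, 2^1500, fun N hN => ?_⟩
  have hN2 : (2:ℕ) ≤ N := le_trans (Nat.le_self_pow (by norm_num) 2) hN
  have hNR : (2:ℝ)^1500 ≤ (N:ℝ) := by
    have h := (Nat.cast_le (α := ℝ)).mpr hN
    rwa [Nat.cast_pow, Nat.cast_ofNat] at h
  have hNbig : (250000:ℝ) ≤ (N:ℝ) := le_trans (le_trans (by norm_num : (250000:ℝ) ≤ 2^18) (pow_le_pow_right₀ (by norm_num) (by norm_num))) hNR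
  have hN0R : (0:ℝ) < (N:ℝ) := lt_of_lt_of_le (by norm_num) hNbig
  have hL1000 : (1000:ℝ) ≤ Real.log N := by
    have h1 : Real.log ((2:ℝ)^1500) ≤ Real.log N := Real.log_le_log (pow_pos two_pos 1500) hNR
    rw [Real.log_pow] at h1
    push_cast at h1
    have hlog2l : 0.6931471803 < Real.log 2 := Real.log_two_gt_d9
    linarith
  have hLN : Real.log N ≤ (N:ℝ) - 1 := Real.log_le_sub_one_of_pos hN0R
  clear hN hNR
  -- k
  set k : ℕ := ⌈Real.log N/1000⌉₊ with hkdef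
  have hk_lb : Real.log N/1000 ≤ (k:ℝ) := Nat.le_ceil _
  have hk_ub : (k:ℝ) < Real.log N/1000 + 1 := Nat.ceil_lt_add_one (by positivity)
  have hkN : k ≤ N := by
    have : (k:ℝ) ≤ (N:ℝ) := by linarith
    exact_mod_cast this
  -- the combinatorial bound
  have hfin : 2 * ((((Finset.range (N+k+1)).filter Nat.Prime).biUnion
      (fun p => Finset.Icc (p - k) (p + k))) ∩ Finset.Icc 1 (N-1)).card + 3 ≤ N := by
    apply key_ineq N k (Nat.sqrt (N+k))
      ((((Finset.range (N+k+1)).filter Nat.Prime).filter (fun p => Nat.sqrt (N+k) < p)).card)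
      _ hL1000 hNbig hk_ub hkN
    · exact Nat.sqrt_le' (N+k)
    · exact Nat.lt_succ_sqrt' (N+k)
    · exact big_primes_pow (N+k)
    · exact le_trans (Finset.card_le_card Finset.inter_subset_left)
        (le_trans (bad_card_le N k) (Nat.mul_le_mul_right (2*k+1) (pi_le (N+k))))
  set bad : Finset ℕ := (((Finset.range (N+k+1)).filter Nat.Prime).biUnion
      (fun p => Finset.Icc (p - k) (p + k))) ∩ Finset.Icc 1 (N-1) with hbaddef
  set B : ℕ := bad.card with hBdef
  -- pigeonhole
  have hbadsub : bad ⊆ Finset.Icc 1 (N-1) := Finset.inter_subset_right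
  have hIccCard : (Finset.Icc 1 (N-1)).card = N - 1 := by rw [Nat.card_Icc]; omega
  set good : Finset ℕ := Finset.Icc 1 (N-1) \ bad with hgooddef
  have hgoodIcc : good ⊆ Finset.Icc 1 (N-1) := Finset.sdiff_subset
  have hgoodcard : good.card = (N-1) - B := by rw [hgooddef, Finset.card_sdiff_of_subset hbadsub, hIccCard]
  set good' : Finset ℕ := good.image (fun n => N - n) with hgood'def
  have hg'card : good'.card = good.card := by
    rw [hgood'def]
    apply Finset.card_image_of_injOn
    intro a ha b hb hab
    have ha' := Finset.mem_Icc.mp (hgoodIcc ha)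
    have hb' := Finset.mem_Icc.mp (hgoodIcc hb)
    simp only at hab
    omega
  have hg'sub : good' ⊆ Finset.Icc 1 (N-1) := by
    intro m hm2
    obtain ⟨a, ha, rfl⟩ := Finset.mem_image.mp hm2
    have ha' := Finset.mem_Icc.mp (hgoodIcc ha)
    rw [Finset.mem_Icc]
    omega
  have hBle : B ≤ N - 1 := hIccCard ▸ Finset.card_le_card hbadsub
  have hunion : (good ∪ good').card ≤ N - 1 :=
    hIccCard ▸ Finset.card_le_card (Finset.union_subset hgoodIcc hg'sub)
  have hinter : 0 < (good ∩ good').card := by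
    have h := Finset.card_union_add_card_inter good good'
    omega
  obtain ⟨n₁, hn₁⟩ := Finset.card_pos.mp hinter
  rw [Finset.mem_inter] at hn₁
  obtain ⟨hn₁good, hn₁'⟩ := hn₁
  obtain ⟨n₂, hn₂good, hn₂eq⟩ := Finset.mem_image.mp hn₁'
  have hn₁I := Finset.mem_Icc.mp (hgoodIcc hn₁good)
  have hn₂I := Finset.mem_Icc.mp (hgoodIcc hn₂good)
  -- good numbers are prime-avoiding
  have hFgood : ∀ n ∈ good, (1/1000:ℝ) * Real.log N ≤ (F n : ℝ) := by
    intro n hng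
    rw [hgooddef, Finset.mem_sdiff] at hng
    obtain ⟨hnI, hnb⟩ := hng
    have hnI' := Finset.mem_Icc.mp hnI
    have hk1 : k + 1 ≤ F n := by
      apply le_F
      intro p hp
      by_contra hlt
      push_neg at hlt
      have hpmem : p ∈ (Finset.range (N+k+1)).filter Nat.Prime :=
        Finset.mem_filter.mpr ⟨Finset.mem_range.mpr (by omega), hp⟩
      exact hnb (by
        rw [hbaddef]
        exact Finset.mem_inter.mpr
          ⟨Finset.mem_biUnion.mpr ⟨p, hpmem, Finset.mem_Icc.mpr (by omega)⟩, hnI⟩)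
    have hcast : (k:ℝ) + 1 ≤ (F n : ℝ) := by exact_mod_cast hk1
    linarith
  refine ⟨n₁, n₂, by omega, by omega, by omega, ?_, ?_⟩
  · exact hFgood n₁ hn₁good
  · exact hFgood n₂ hn₂good
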